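/- Let n > 0, K > 0, R₀ ≥ 0, 0 ≤ ρ < 1, 0 < λ_min ≤ λ_max, and η = 2/((λ_min + λ_max)·n). Let θ : ℕ → ℝᵖ satisfy θ_{t+1} = θ_t − η·J_tᵀ·r_t, where for each t the matrix J_t ∈ M_{m×p}(ℝ) satisfies ‖J_t‖_op ≤ K·√n and the vector r_t ∈ ℝᵐ satisfies ‖r_t‖₂ ≤ R₀·ρᵗ. Then for every T ∈ ℕ, ‖θ_T − θ₀‖₂ ≤ Σ_{t=0}^{T−1} ‖θ_{t+1} − θ_t‖₂ ≤ 2·K·R₀/((λ_min + λ_max)·√n·(1 − ρ)). In particular the total parameter movement is O(n^{−1/2}) in the width n. -/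

import Mathlib

open Matrix

/-- Frobenius norm of a real matrix. -/
noncomputable def frobNorm {m p : ℕ} (A : Matrix (Fin m) (Fin p) ℝ) : ℝ :=
  Real.sqrt (∑ i, ∑ j, (A i j) ^ 2)

/-- ℓ²→ℓ² operator norm of a real matrix. -/
noncomputable def opNorm {m p : ℕ} (A : Matrix (Fin m) (Fin p) ℝ) : ℝ :=
  ‖LinearMap.toContinuousLinearMap (Matrix.toEuclideanLin A)‖

/-- Euclidean (ℓ²) norm of a vector in ℝᵖ. -/
noncomputable def eNorm {p : ℕ} (x : Fin p → ℝ) : ℝ :=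
  Real.sqrt (∑ i, (x i) ^ 2)

open scoped Matrix.Norms.L2Operator in
lemma opNorm_eq_l2 {m p : ℕ} (A : Matrix (Fin m) (Fin p) ℝ) : opNorm A = ‖A‖ := rfl

lemma eNorm_eq {p : ℕ} (x : Fin p → ℝ) :
    eNorm x = ‖(WithLp.equiv 2 (Fin p → ℝ)).symm x‖ := by
  rw [eNorm, EuclideanSpace.norm_eq]
  congr 1
  refine Finset.sum_congr rfl fun i _ => ?_
  rw [Real.norm_eq_abs, sq_abs]
  rfl

lemma eNorm_nonneg {p : ℕ} (x : Fin p → ℝ) : 0 ≤ eNorm x := Real.sqrt_nonneg _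

open scoped Matrix.Norms.L2Operator in
lemma eNorm_mulVec_le {m p : ℕ} (A : Matrix (Fin m) (Fin p) ℝ) (v : Fin m → ℝ) :
    eNorm (Aᵀ.mulVec v) ≤ opNorm A * eNorm v := by
  rw [eNorm_eq, eNorm_eq, opNorm_eq_l2]
  have h1 : ‖Aᵀ‖ = ‖A‖ := by
    have := Matrix.l2_opNorm_conjTranspose A
    rwa [Matrix.conjTranspose_eq_transpose_of_trivial] at this
  rw [← h1]
  exact Matrix.l2_opNorm_mulVec Aᵀ ((WithLp.equiv 2 (Fin m → ℝ)).symm v)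

/-- Total parameter movement is `O(n^{-1/2})` (Lemma 1): under the per-step gradient-descent
dynamics `θ (t+1) = θ t − η (J t)ᵀ (r t)` with `‖J t‖_op ≤ K√n`, `‖r t‖₂ ≤ R₀ ρ^t` and
`η = 2/((λmin + λmax) n)`, for every `T`,
`‖θ T − θ 0‖₂ ≤ Σ_{t<T} ‖θ (t+1) − θ t‖₂ ≤ 2 K R₀ / ((λmin + λmax) √n (1 − ρ))`. -/
theorem stmt_9 {m p : ℕ} (n K R₀ ρ lmin lmax η : ℝ)
    (hn : 0 < n) (hK : 0 < K) (hR₀ : 0 ≤ R₀) (hρ₀ : 0 ≤ ρ) (hρ₁ : ρ < 1)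
    (hmin : 0 < lmin) (hle : lmin ≤ lmax) (hη : η = 2 / ((lmin + lmax) * n))
    (θ : ℕ → (Fin p → ℝ)) (J : ℕ → Matrix (Fin m) (Fin p) ℝ) (r : ℕ → (Fin m → ℝ))
    (hθ : ∀ t, θ (t + 1) = θ t - η • (J t)ᵀ.mulVec (r t))
    (hJ : ∀ t, opNorm (J t) ≤ K * Real.sqrt n)
    (hr : ∀ t, eNorm (r t) ≤ R₀ * ρ ^ t) :
    ∀ T : ℕ,
      eNorm (θ T - θ 0) ≤ ∑ t ∈ Finset.range T, eNorm (θ (t + 1) - θ t) ∧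
      ∑ t ∈ Finset.range T, eNorm (θ (t + 1) - θ t)
        ≤ 2 * K * R₀ / ((lmin + lmax) * Real.sqrt n * (1 - ρ)) := by
  have hsum : 0 < lmin + lmax := by linarith
  have hsqrt : 0 < Real.sqrt n := Real.sqrt_pos.mpr hn
  have hηpos : 0 ≤ η := by
    rw [hη]; positivity
  intro T
  constructor
  · -- triangle inequality, telescoping
    induction T with
    | zero => simp [eNorm]
    | succ T ih =>
      rw [Finset.sum_range_succ]
      have tri : eNorm (θ (T+1) - θ 0) ≤ eNorm (θ (T+1) - θ T) + eNorm (θ T - θ 0) := by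
        rw [eNorm_eq, eNorm_eq, eNorm_eq]
        have : (WithLp.equiv 2 (Fin p → ℝ)).symm (θ (T+1) - θ 0)
            = (WithLp.equiv 2 (Fin p → ℝ)).symm (θ (T+1) - θ T)
              + (WithLp.equiv 2 (Fin p → ℝ)).symm (θ T - θ 0) := by
          simp [← map_add]
        rw [this]
        exact norm_add_le _ _
      calc eNorm (θ (T+1) - θ 0) ≤ eNorm (θ (T+1) - θ T) + eNorm (θ T - θ 0) := tri
        _ ≤ eNorm (θ (T+1) - θ T) + ∑ t ∈ Finset.range T, eNorm (θ (t + 1) - θ t) := by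
            linarith
        _ = _ := by ring
  · -- bound each step and sum geometric series
    have step : ∀ t, eNorm (θ (t + 1) - θ t) ≤ η * (K * Real.sqrt n) * (R₀ * ρ ^ t) := by
      intro t
      have h1 : θ (t + 1) - θ t = -(η • (J t)ᵀ.mulVec (r t)) := by
        rw [hθ t]; abel
      have h2 : eNorm (θ (t + 1) - θ t) = η * eNorm ((J t)ᵀ.mulVec (r t)) := by
        rw [h1, eNorm_eq, eNorm_eq]
        rw [show (WithLp.equiv 2 (Fin p → ℝ)).symm (-(η • (J t)ᵀ.mulVec (r t)))
            = -(η • (WithLp.equiv 2 (Fin p → ℝ)).symm ((J t)ᵀ.mulVec (r t))) by rfl]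
        rw [norm_neg, norm_smul, Real.norm_eq_abs, abs_of_nonneg hηpos]
      rw [h2]
      have h3 := eNorm_mulVec_le (J t) (r t)
      have h4 : eNorm ((J t)ᵀ.mulVec (r t)) ≤ (K * Real.sqrt n) * (R₀ * ρ ^ t) := by
        calc eNorm ((J t)ᵀ.mulVec (r t)) ≤ opNorm (J t) * eNorm (r t) := h3
          _ ≤ (K * Real.sqrt n) * (R₀ * ρ ^ t) := by
              apply mul_le_mul (hJ t) (hr t) (eNorm_nonneg _)
              positivity
      calc η * eNorm ((J t)ᵀ.mulVec (r t)) ≤ η * ((K * Real.sqrt n) * (R₀ * ρ ^ t)) :=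
            mul_le_mul_of_nonneg_left h4 hηpos
        _ = η * (K * Real.sqrt n) * (R₀ * ρ ^ t) := by ring
    calc ∑ t ∈ Finset.range T, eNorm (θ (t + 1) - θ t)
        ≤ ∑ t ∈ Finset.range T, η * (K * Real.sqrt n) * (R₀ * ρ ^ t) :=
          Finset.sum_le_sum fun t _ => step t
      _ = η * (K * Real.sqrt n) * R₀ * ∑ t ∈ Finset.range T, ρ ^ t := by
          rw [Finset.mul_sum]; exact Finset.sum_congr rfl fun t _ => by ring
      _ ≤ η * (K * Real.sqrt n) * R₀ * (1 / (1 - ρ)) := by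
          apply mul_le_mul_of_nonneg_left _ (by positivity)
          have := tsum_geometric_of_lt_one hρ₀ hρ₁
          calc ∑ t ∈ Finset.range T, ρ ^ t ≤ ∑' t : ℕ, ρ ^ t := by
                apply Summable.sum_le_tsum _ (fun t _ => by positivity)
                exact summable_geometric_of_lt_one hρ₀ hρ₁
            _ = (1 - ρ)⁻¹ := this
            _ = 1 / (1 - ρ) := (one_div _).symm
      _ = 2 * K * R₀ / ((lmin + lmax) * Real.sqrt n * (1 - ρ)) := by
          have hn' : Real.sqrt n * Real.sqrt n = n := Real.mul_self_sqrt hn.le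
          rw [hη, ← hn']
          have h1ρ : (0:ℝ) < 1 - ρ := by linarith
          field_simp
          ring_nf
          rw [Real.sq_sqrt hn.le]
          ring_nf; rw [Real.sq_sqrt hn.le]; ring
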